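/- Let n ≥ 2 be an even integer and let t be an integer with 1 ≤ t ≤ n. Then Σ_{i=0}^{n/2} C(n,2i) · 3^{2i} · K_t(4; 2i) = 2^{n−1} · C(n,t) · (−3)^t. -/
import Mathlib


/-- The `q`-ary Krawtchouk polynomial `K_t(q;x)` (with parameter `n`), evaluated at a
natural number `x`:  `K_t(q;x) = ∑_{ℓ=0}^{t} (-1)^ℓ C(x,ℓ) C(n-x,t-ℓ) (q-1)^{t-ℓ}`. -/
def kraw (n q t x : ℕ) : ℤ :=
  ∑ l ∈ Finset.range (t + 1),
    (-1 : ℤ) ^ l * (x.choose l) * ((n - x).choose (t - l)) * ((q : ℤ) - 1) ^ (t - l)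

open Polynomial Finset

lemma coeff_binom (a b : ℤ) (m k : ℕ) :
    ((C a * X + C b) ^ m).coeff k = a ^ k * b ^ (m - k) * m.choose k := by
  have hterm : ∀ j : ℕ, (C a * X)^j * (C b)^(m-j) * ((m.choose j : ℕ) : ℤ[X])
      = C (a^j * b^(m-j) * (m.choose j : ℤ)) * X^j := by
    intro j
    rw [← C_eq_natCast, mul_pow, ← C_pow, ← C_pow, C_mul, C_mul]
    ring
  rw [add_pow, finset_sum_coeff]
  rw [Finset.sum_eq_single k]
  · rw [hterm, coeff_C_mul, coeff_X_pow]; simp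
  · intro j _ hj
    rw [hterm, coeff_C_mul, coeff_X_pow]; simp [Ne.symm hj]
  · intro hk
    simp at hk
    simp [Nat.choose_eq_zero_of_lt hk]

lemma coeff_prod_eq_kraw (n t x : ℕ) :
    (((C (-1) * X + C 1)^x * (C 3 * X + C 1)^(n-x)) : ℤ[X]).coeff t = kraw n 4 t x := by
  rw [coeff_mul, Finset.Nat.sum_antidiagonal_eq_sum_range_succ_mk]
  unfold kraw
  apply Finset.sum_congr rfl
  intro l hl
  rw [coeff_binom, coeff_binom]
  have h4 : ((4:ℕ) : ℤ) - 1 = 3 := by norm_num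
  rw [h4]
  push_cast
  ring

lemma sum_even_vanish {M : Type*} [AddCommMonoid M] (f : ℕ → M)
    (hf : ∀ x, Odd x → f x = 0) (m : ℕ) :
    ∑ x ∈ Finset.range (2*m+1), f x = ∑ i ∈ Finset.range (m+1), f (2*i) := by
  induction m with
  | zero => simp
  | succ k ih =>
    have h1 : 2*(k+1)+1 = (2*k+1)+1+1 := by ring
    rw [h1, Finset.sum_range_succ, Finset.sum_range_succ, ih,
      hf (2*k+1) ⟨k, by ring⟩, Finset.sum_range_succ]
    have : 2*k+1+1 = 2*(k+1) := by ring
    rw [this, add_zero, Finset.sum_range_succ, Finset.sum_range_succ]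

/-- Lemma: for even `n` and `1 ≤ t ≤ n`,
`∑_{i=0}^{n/2} C(n,2i) 3^{2i} K_t(4;2i) = 2^{n-1} C(n,t) (-3)^t`. -/
theorem kraw_even_sum (n t : ℕ) (hn : 2 ≤ n) (hneven : Even n)
    (ht1 : 1 ≤ t) (htn : t ≤ n) :
    ∑ i ∈ Finset.range (n / 2 + 1),
        ((n.choose (2 * i)) : ℤ) * 3 ^ (2 * i) * kraw n 4 t (2 * i)
      = 2 ^ (n - 1) * (n.choose t) * (-3) ^ t := by
  obtain ⟨m, hm⟩ := hneven
  have hm' : n = 2 * m := by omega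
  subst hm'
  have hm1 : 1 ≤ m := by omega
  have hdiv : 2 * m / 2 = m := by omega
  rw [hdiv]
  set p : ℤ[X] := C (-1) * X + C 1 with hp
  set q : ℤ[X] := C 3 * X + C 1 with hq
  have e1 : C 3 * p + q = (C 4 : ℤ[X]) := by
    rw [hp, hq]; simp only [map_ofNat, map_neg, map_one]; ring
  have e2 : C (-3) * p + q = C 2 * (C 3 * X + C (-1)) := by
    rw [hp, hq]; simp only [map_ofNat, map_neg, map_one]; ring
  have h1 : ∑ x ∈ Finset.range (2*m+1),
      (C 3 * p)^x * q^(2*m-x) * (((2*m).choose x : ℕ) : ℤ[X]) = C 4 ^ (2*m) := by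
    rw [← add_pow, e1]
  have h2 : ∑ x ∈ Finset.range (2*m+1),
      (C (-3) * p)^x * q^(2*m-x) * (((2*m).choose x : ℕ) : ℤ[X])
      = (C 2 * (C 3 * X + C (-1)))^(2*m) := by
    rw [← add_pow, e2]
  have hsum : ∑ x ∈ Finset.range (2*m+1),
      C (((3:ℤ)^x + (-3)^x) * ((2*m).choose x : ℤ)) * (p^x * q^(2*m-x))
      = C 4 ^ (2*m) + (C 2 * (C 3 * X + C (-1)))^(2*m) := by
    rw [← h1, ← h2, ← Finset.sum_add_distrib]
    apply Finset.sum_congr rfl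
    intro x _
    rw [← C_eq_natCast, mul_pow, mul_pow, ← C_pow, ← C_pow, C_mul, C_add]
    ring
  have hc := congrArg (fun P : ℤ[X] => P.coeff t) hsum
  have ht0 : t ≠ 0 := by omega
  simp only [finset_sum_coeff, coeff_C_mul, hp, hq, coeff_prod_eq_kraw, coeff_add] at hc
  rw [← C_pow, mul_pow, ← C_pow, coeff_C_mul, coeff_binom, coeff_C, if_neg ht0, zero_add] at hc
  -- hc : ∑ x ∈ range (2*m+1), (3^x + (-3)^x) * choose * kraw = 2^(2m) * (3^t * (-1)^(2m-t) * choose)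
  have hvanish : ∀ x, Odd x →
      ((3:ℤ)^x + (-3)^x) * ((2*m).choose x : ℤ) * kraw (2*m) 4 t x = 0 := by
    intro x hx
    rw [hx.neg_pow]
    ring
  rw [sum_even_vanish _ hvanish m] at hc
  have heq : ∀ i : ℕ, ((3:ℤ)^(2*i) + (-3)^(2*i)) * ((2*m).choose (2*i) : ℤ)
      * kraw (2*m) 4 t (2*i)
      = 2 * ((((2*m).choose (2*i)) : ℤ) * 3 ^ (2 * i) * kraw (2*m) 4 t (2*i)) := by
    intro i
    have : ((-3:ℤ))^(2*i) = 3^(2*i) := (Even.neg_pow ⟨i, by ring⟩ 3)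
    rw [this]; ring
  simp only [heq, ← Finset.mul_sum] at hc
  have hpar : ((-1:ℤ))^(2*m - t) = (-1)^t := by
    rcases Nat.even_or_odd t with he | ho
    · have h2 : Even (2*m - t) := (Nat.even_sub htn).mpr (iff_of_true ⟨m, by ring⟩ he)
      rw [h2.neg_one_pow, he.neg_one_pow]
    · have h2 : Odd (2*m - t) := Nat.Even.sub_odd htn ⟨m, by ring⟩ ho
      rw [h2.neg_one_pow, ho.neg_one_pow]
  rw [hpar] at hc
  have hpow : (2:ℤ)^(2*m) = 2 * 2^(2*m-1) := by
    rw [← pow_succ']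
    congr 1
    omega
  rw [hpow] at hc
  refine mul_left_cancel₀ (two_ne_zero (α := ℤ)) ?_
  have hneg3 : ((-3:ℤ))^t = (-1)^t * 3^t := by
    rw [neg_pow]
  rw [hc, hneg3]
  ring
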